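/- Let V be a free A-module of rank r, let ∇̄ : V → V be an A-linear map, and let ϖ_0 : V ⊗_A B → B be a surjective B-linear map such that r·ϖ_0((∇̄⊗id_B)(x)) = μ̂_0·ϖ_0(x) for all x ∈ V ⊗_A B, where μ̂_0 ∈ B is an element whose coefficient of w^1 is nonzero. Then every A-submodule U ⊆ V with ∇̄(U) ⊆ U and such that the quotient V/U is a free A-module satisfies U = 0 or U = V. -/

import Mathlib

open Polynomial TensorProduct

noncomputable section

/-- The ring `A = ℂ[z]/(z^m)`. -/
def Amod (m : ℕ) : Type :=
  Polynomial ℂ ⧸ Ideal.span {(Polynomial.X : Polynomial ℂ) ^ m}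

instance (m : ℕ) : CommRing (Amod m) :=
  inferInstanceAs (CommRing (Polynomial ℂ ⧸ Ideal.span {(Polynomial.X : Polynomial ℂ) ^ m}))

instance (m : ℕ) : Algebra ℂ (Amod m) :=
  inferInstanceAs (Algebra ℂ (Polynomial ℂ ⧸ Ideal.span {(Polynomial.X : Polynomial ℂ) ^ m}))

/-- The ring `B = ℂ[w]/(w^N)` with `N = m*r - r + 1`. -/
def Bmod (m r : ℕ) : Type :=
  Polynomial ℂ ⧸ Ideal.span {(Polynomial.X : Polynomial ℂ) ^ (m * r - r + 1)}

instance (m r : ℕ) : CommRing (Bmod m r) :=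
  inferInstanceAs
    (CommRing (Polynomial ℂ ⧸ Ideal.span {(Polynomial.X : Polynomial ℂ) ^ (m * r - r + 1)}))

instance (m r : ℕ) : Algebra ℂ (Bmod m r) :=
  inferInstanceAs
    (Algebra ℂ (Polynomial ℂ ⧸ Ideal.span {(Polynomial.X : Polynomial ℂ) ^ (m * r - r + 1)}))

/-- The class of a polynomial in `A = ℂ[z]/(z^m)`. -/
def Amod.mk (m : ℕ) (p : Polynomial ℂ) : Amod m :=
  (Ideal.Quotient.mk (Ideal.span {(Polynomial.X : Polynomial ℂ) ^ m}) p : _)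

/-- The class of a polynomial in `B = ℂ[w]/(w^N)`. -/
def Bmod.mk (m r : ℕ) (p : Polynomial ℂ) : Bmod m r :=
  (Ideal.Quotient.mk (Ideal.span {(Polynomial.X : Polynomial ℂ) ^ (m * r - r + 1)}) p : _)

/-- The element `z ∈ A`. -/
def Amod.z (m : ℕ) : Amod m := Amod.mk m Polynomial.X

/-- The element `w ∈ B`. -/
def Bmod.w (m r : ℕ) : Bmod m r := Bmod.mk m r Polynomial.X

/-- The coefficient of `w^j` in the unique polynomial representative of degree `< N` of an
element of `B = ℂ[w]/(w^N)` (for `j < N`). -/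
noncomputable def Bmod.coeff (m r : ℕ) (j : ℕ) (b : Bmod m r) : ℂ :=
  ((Quotient.out
      (show Polynomial ℂ ⧸ Ideal.span {(Polynomial.X : Polynomial ℂ) ^ (m * r - r + 1)} from b))
      %ₘ (Polynomial.X ^ (m * r - r + 1))).coeff j

/-- The canonical map `ℂ[z]/(z^m) → ℂ[w]/(w^N)`, `z ↦ w^r` (raw version). -/
noncomputable def AtoB0 (m r : ℕ) [NeZero m] :
    (Polynomial ℂ ⧸ Ideal.span {(Polynomial.X : Polynomial ℂ) ^ m}) →+*
      (Polynomial ℂ ⧸ Ideal.span {(Polynomial.X : Polynomial ℂ) ^ (m * r - r + 1)}) :=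
  Ideal.Quotient.lift (Ideal.span {(Polynomial.X : Polynomial ℂ) ^ m})
    ((Ideal.Quotient.mk (Ideal.span {(Polynomial.X : Polynomial ℂ) ^ (m * r - r + 1)})).comp
      (if 1 ≤ r then (Polynomial.aeval ((Polynomial.X : Polynomial ℂ) ^ r)).toRingHom
       else (Polynomial.aeval (0 : Polynomial ℂ)).toRingHom))
    (by
      intro a ha
      rw [Ideal.mem_span_singleton] at ha
      obtain ⟨c, rfl⟩ := ha
      rw [map_mul]
      apply mul_eq_zero_of_left
      have hm : 1 ≤ m := Nat.one_le_iff_ne_zero.mpr (NeZero.ne m)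
      by_cases h : 1 ≤ r
      · rw [if_pos h, map_pow, RingHom.comp_apply, AlgHom.toRingHom_eq_coe, RingHom.coe_coe,
          Polynomial.aeval_X, ← map_pow, ← pow_mul, Ideal.Quotient.eq_zero_iff_mem,
          Ideal.mem_span_singleton]
        have h1 : r ≤ r * m := Nat.le_mul_of_pos_right r (by omega)
        have h2 : m * r = r * m := Nat.mul_comm m r
        exact pow_dvd_pow _ (by omega)
      · rw [if_neg h, map_pow, RingHom.comp_apply, AlgHom.toRingHom_eq_coe, RingHom.coe_coe,
          Polynomial.aeval_X, map_zero, zero_pow (NeZero.ne m)])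

/-- The canonical map `A → B`, `z ↦ w^r`. -/
noncomputable def AtoB (m r : ℕ) [NeZero m] : Amod m →+* Bmod m r := AtoB0 m r

noncomputable instance (m r : ℕ) [NeZero m] : Algebra (Amod m) (Bmod m r) :=
  (AtoB m r).toAlgebra

namespace S4Aux

lemma Bmk_surjective (m r : ℕ) : Function.Surjective (Bmod.mk m r) :=
  Ideal.Quotient.mk_surjective

lemma Bmk_mul (m r : ℕ) (p q : Polynomial ℂ) :
    Bmod.mk m r (p * q) = Bmod.mk m r p * Bmod.mk m r q :=
  map_mul (Ideal.Quotient.mk _) p q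

lemma Bmk_add (m r : ℕ) (p q : Polynomial ℂ) :
    Bmod.mk m r (p + q) = Bmod.mk m r p + Bmod.mk m r q :=
  map_add (Ideal.Quotient.mk _) p q

lemma Bmk_sub (m r : ℕ) (p q : Polynomial ℂ) :
    Bmod.mk m r (p - q) = Bmod.mk m r p - Bmod.mk m r q :=
  map_sub (Ideal.Quotient.mk _) p q

lemma Bmk_pow (m r : ℕ) (p : Polynomial ℂ) (k : ℕ) :
    Bmod.mk m r (p ^ k) = Bmod.mk m r p ^ k :=
  map_pow (Ideal.Quotient.mk _) p k

lemma Balgebra_eq (m r : ℕ) (c : ℂ) :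
    algebraMap ℂ (Bmod m r) c = Bmod.mk m r (C c) := rfl

lemma Bmk_eq_zero_iff (m r : ℕ) (p : Polynomial ℂ) :
    Bmod.mk m r p = 0 ↔ (X : Polynomial ℂ) ^ (m * r - r + 1) ∣ p := by
  rw [show (Bmod.mk m r p = 0) ↔ _ from Ideal.Quotient.eq_zero_iff_mem,
    Ideal.mem_span_singleton]

lemma Bmk_eq_iff (m r : ℕ) (p q : Polynomial ℂ) :
    Bmod.mk m r p = Bmod.mk m r q ↔ (X : Polynomial ℂ) ^ (m * r - r + 1) ∣ (p - q) := by
  constructor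
  · intro h
    have : Bmod.mk m r (p - q) = 0 := by rw [Bmk_sub, h, sub_self]
    exact (Bmk_eq_zero_iff m r _).1 this
  · intro h
    have h2 : Bmod.mk m r (p - q) = 0 := (Bmk_eq_zero_iff m r _).2 h
    rw [Bmk_sub] at h2
    exact sub_eq_zero.mp h2

lemma Bnilpotent (m r : ℕ) (p : Polynomial ℂ) (h : (X : Polynomial ℂ) ∣ p) :
    IsNilpotent (Bmod.mk m r p) := by
  refine ⟨m * r - r + 1, ?_⟩
  rw [← Bmk_pow, Bmk_eq_zero_iff]
  exact pow_dvd_pow_of_dvd h _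

lemma Bunit (m r : ℕ) (p : Polynomial ℂ) (h : p.coeff 0 ≠ 0) :
    IsUnit (Bmod.mk m r p) := by
  have hsplit : Bmod.mk m r p
      = algebraMap ℂ (Bmod m r) (p.coeff 0) + Bmod.mk m r (p - C (p.coeff 0)) := by
    rw [Balgebra_eq, ← Bmk_add]
    congr 1
    ring
  rw [hsplit]
  refine IsNilpotent.isUnit_add_left_of_commute ?_ ?_ (Commute.all _ _)
  · exact Bnilpotent m r _ (X_dvd_iff.2 (by simp))
  · exact (Ne.isUnit h).map (algebraMap ℂ (Bmod m r))

lemma Bw_pow_ne_zero (m r k : ℕ) (hk : k < m * r - r + 1) : (Bmod.w m r) ^ k ≠ 0 := by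
  intro h
  rw [Bmod.w, ← Bmk_pow, Bmk_eq_zero_iff] at h
  have := Polynomial.natDegree_le_of_dvd h (pow_ne_zero _ X_ne_zero)
  simp only [natDegree_pow, natDegree_X, mul_one] at this
  omega

lemma Bw_nilpotent (m r : ℕ) : IsNilpotent (Bmod.w m r) :=
  Bnilpotent m r X dvd_rfl

lemma Bcoeff_mk (m r : ℕ) (p : Polynomial ℂ) (j : ℕ) :
    Bmod.coeff m r j (Bmod.mk m r p) = (p %ₘ (X : Polynomial ℂ) ^ (m * r - r + 1)).coeff j := by
  set N := m * r - r + 1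
  set b : Polynomial ℂ ⧸ Ideal.span {(X : Polynomial ℂ) ^ N} := Bmod.mk m r p with hb
  have hout : Ideal.Quotient.mk (Ideal.span {(X : Polynomial ℂ) ^ N}) (Quotient.out b) = b :=
    Quotient.out_eq b
  have hd : (X : Polynomial ℂ) ^ N ∣ (Quotient.out b - p) := by
    have : Bmod.mk m r (Quotient.out b) = Bmod.mk m r p := hout
    exact (Bmk_eq_iff m r _ _).1 this
  obtain ⟨c, hc⟩ := hd
  have hrw : Quotient.out b = p + (X : Polynomial ℂ) ^ N * c := by
    rw [← hc]; ring
  show ((Quotient.out b) %ₘ (X ^ N)).coeff j = _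
  rw [hrw, add_modByMonic]
  have hz : ((X : Polynomial ℂ) ^ N * c) %ₘ (X ^ N) = 0 :=
    (modByMonic_eq_zero_iff_dvd (monic_X_pow N)).2 ⟨c, rfl⟩
  rw [hz, add_zero]

lemma Bcoeff_lift (m r : ℕ) (p : Polynomial ℂ) (j : ℕ) (hj : j < m * r - r + 1) :
    Bmod.coeff m r j (Bmod.mk m r p) = p.coeff j := by
  rw [Bcoeff_mk]
  set N := m * r - r + 1
  conv_rhs => rw [← modByMonic_add_div p (X ^ N)]
  rw [coeff_add, (commute_X_pow _ N).eq, coeff_mul_X_pow']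
  simp [Nat.not_le.2 hj]

lemma Amk_surjective (m : ℕ) : Function.Surjective (Amod.mk m) :=
  Ideal.Quotient.mk_surjective

lemma Amk_add (m : ℕ) (p q : Polynomial ℂ) :
    Amod.mk m (p + q) = Amod.mk m p + Amod.mk m q :=
  map_add (Ideal.Quotient.mk _) p q

lemma Amk_sub (m : ℕ) (p q : Polynomial ℂ) :
    Amod.mk m (p - q) = Amod.mk m p - Amod.mk m q :=
  map_sub (Ideal.Quotient.mk _) p q

lemma Amk_one (m : ℕ) : Amod.mk m 1 = 1 := rfl

lemma Amk_pow (m : ℕ) (p : Polynomial ℂ) (k : ℕ) :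
    Amod.mk m (p ^ k) = Amod.mk m p ^ k :=
  map_pow (Ideal.Quotient.mk _) p k

lemma Aalgebra_eq (m : ℕ) (c : ℂ) :
    algebraMap ℂ (Amod m) c = Amod.mk m (C c) := rfl

lemma Amk_eq_zero_iff (m : ℕ) (p : Polynomial ℂ) :
    Amod.mk m p = 0 ↔ (X : Polynomial ℂ) ^ m ∣ p := by
  rw [show (Amod.mk m p = 0) ↔ _ from Ideal.Quotient.eq_zero_iff_mem,
    Ideal.mem_span_singleton]

lemma Anilpotent (m : ℕ) (p : Polynomial ℂ) (h : (X : Polynomial ℂ) ∣ p) :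
    IsNilpotent (Amod.mk m p) := by
  refine ⟨m, ?_⟩
  rw [← Amk_pow, Amk_eq_zero_iff]
  exact pow_dvd_pow_of_dvd h _

lemma Aunit (m : ℕ) (p : Polynomial ℂ) (h : p.coeff 0 ≠ 0) :
    IsUnit (Amod.mk m p) := by
  have hsplit : Amod.mk m p
      = algebraMap ℂ (Amod m) (p.coeff 0) + Amod.mk m (p - C (p.coeff 0)) := by
    rw [Aalgebra_eq, ← Amk_add]
    congr 1
    ring
  rw [hsplit]
  refine IsNilpotent.isUnit_add_left_of_commute ?_ ?_ (Commute.all _ _)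
  · exact Anilpotent m _ (X_dvd_iff.2 (by simp))
  · exact (Ne.isUnit h).map (algebraMap ℂ (Amod m))

instance ANontrivial (m : ℕ) [NeZero m] : Nontrivial (Amod m) := by
  refine Ideal.Quotient.nontrivial_iff.mpr ?_
  rw [Ne, Ideal.span_singleton_eq_top]
  intro h
  exact Polynomial.not_isUnit_X ((isUnit_pow_iff (NeZero.ne m)).1 h)

instance BNontrivial (m r : ℕ) : Nontrivial (Bmod m r) := by
  refine Ideal.Quotient.nontrivial_iff.mpr ?_
  rw [Ne, Ideal.span_singleton_eq_top]
  intro h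
  exact Polynomial.not_isUnit_X ((isUnit_pow_iff (by omega : m * r - r + 1 ≠ 0)).1 h)

instance ALocal (m : ℕ) [NeZero m] : IsLocalRing (Amod m) := by
  refine IsLocalRing.of_isUnit_or_isUnit_one_sub_self (fun a => ?_)
  obtain ⟨p, rfl⟩ := Amk_surjective m a
  by_cases h : p.coeff 0 = 0
  · right
    have h1 : (1 : Amod m) - Amod.mk m p = Amod.mk m (1 - p) := by
      rw [Amk_sub, Amk_one]
    rw [h1]
    apply Aunit
    simp [h]
  · exact Or.inl (Aunit m p h)

instance ANoetherian (m : ℕ) : IsNoetherianRing (Amod m) :=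
  inferInstanceAs (IsNoetherianRing
    (Polynomial ℂ ⧸ Ideal.span {(Polynomial.X : Polynomial ℂ) ^ m}))

/-- the evaluation-at-0 map `A → ℂ`. -/
def eps (m : ℕ) [NeZero m] : Amod m →+* ℂ :=
  Ideal.Quotient.lift (Ideal.span {(Polynomial.X : Polynomial ℂ) ^ m})
    (Polynomial.evalRingHom 0)
    (by
      intro a ha
      rw [Ideal.mem_span_singleton] at ha
      obtain ⟨c, rfl⟩ := ha
      simp [zero_pow (NeZero.ne m)])

lemma eps_mk (m : ℕ) [NeZero m] (p : Polynomial ℂ) : eps m (Amod.mk m p) = p.eval 0 := rfl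

lemma algebraMap_Amk (m r : ℕ) [NeZero m] (hr : 1 ≤ r) (p : Polynomial ℂ) :
    algebraMap (Amod m) (Bmod m r) (Amod.mk m p)
      = Bmod.mk m r (Polynomial.aeval ((X : Polynomial ℂ) ^ r) p) := by
  show AtoB0 m r (Ideal.Quotient.mk _ p) = _
  rw [AtoB0, Ideal.Quotient.lift_mk, if_pos hr]
  rfl

/-- every element of the image of `A` agrees with a constant modulo `w^r`. -/
lemma algebraMap_sub_const (m r : ℕ) [NeZero m] (hr : 1 ≤ r) (α : Amod m) :
    ∃ t : Bmod m r, algebraMap (Amod m) (Bmod m r) α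
      = algebraMap ℂ (Bmod m r) (eps m α) + (Bmod.w m r) ^ r * t := by
  obtain ⟨p, rfl⟩ := Amk_surjective m α
  rw [algebraMap_Amk m r hr, eps_mk, Balgebra_eq]
  have hdvd : (X : Polynomial ℂ) ∣ (p - C (p.eval 0)) := by
    rw [X_dvd_iff, coeff_sub, coeff_zero_eq_eval_zero]
    simp
  obtain ⟨d, hd⟩ := hdvd
  refine ⟨Bmod.mk m r (Polynomial.aeval ((X : Polynomial ℂ) ^ r) d), ?_⟩
  rw [Bmod.w, ← Bmk_pow, ← Bmk_mul, ← Bmk_add]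
  congr 1
  have := congrArg (Polynomial.aeval ((X : Polynomial ℂ) ^ r)) hd
  rw [map_sub, map_mul, Polynomial.aeval_X, aeval_C] at this
  have hC : (algebraMap ℂ (Polynomial ℂ)) (p.eval 0) = C (p.eval 0) := rfl
  rw [hC] at this
  linear_combination this

end S4Aux

namespace S4Aux

/-- **Key valuation lemma.** If `χ` is a monic polynomial over `A` of degree `≤ r - 1` and
`λ = mk q` with `q.coeff 1 ≠ 0`, then `χ(λ)` is `w^e` times a unit for some `e ≤ deg χ`. -/
lemma keyL (m r : ℕ) [NeZero m] (hm : 2 ≤ m) (hr : 1 ≤ r)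
    (q : Polynomial ℂ) (hq : q.coeff 1 ≠ 0)
    (χ : Polynomial (Amod m)) (hmon : χ.Monic) (hd : χ.natDegree ≤ r - 1) :
    ∃ (e : ℕ) (u : Bmod m r), e ≤ χ.natDegree ∧ IsUnit u ∧
      Polynomial.eval (Bmod.mk m r q) (χ.map (algebraMap (Amod m) (Bmod m r)))
        = (Bmod.w m r) ^ e * u := by
  set B := Bmod m r
  set lam : B := Bmod.mk m r q with hlam
  set d := χ.natDegree with hdd
  set P : Polynomial ℂ := χ.map (eps m) with hP
  have hPmon : P.Monic := hmon.map (eps m)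
  have hPdeg : P.natDegree = d := hmon.natDegree_map (eps m)
  have hPne : P ≠ 0 := hPmon.ne_zero
  -- the constant term of the eigenvalue
  set a : ℂ := q.coeff 0 with ha
  -- λ - a = w * unit
  have hXdvd : (X : Polynomial ℂ) ∣ (q - C a) := by
    rw [X_dvd_iff, coeff_sub, coeff_C]
    simp [ha]
  obtain ⟨q1, hq1⟩ := hXdvd
  have hq1c : q1.coeff 0 = q.coeff 1 := by
    have := congrArg (fun p => Polynomial.coeff p 1) hq1
    simpa [coeff_sub, coeff_C, coeff_X_mul] using this.symm
  have hq1unit : IsUnit (Bmod.mk m r q1) := Bunit m r q1 (by rw [hq1c]; exact hq)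
  have hlam_sub : lam - algebraMap ℂ B a = Bmod.w m r * Bmod.mk m r q1 := by
    rw [hlam, Balgebra_eq, ← Bmk_sub, hq1, Bmod.w, ← Bmk_mul]
  -- the multiplicity decomposition of P at a
  set e := P.rootMultiplicity a with he
  obtain ⟨Q, hQ, hQnd⟩ := P.exists_eq_pow_rootMultiplicity_mul_and_not_dvd hPne a
  have hQa : Q.eval a ≠ 0 := fun h => hQnd (dvd_iff_isRoot.2 h)
  have hed : e ≤ d := by
    rw [← hPdeg]
    have hdvd : (X - C a) ^ e ∣ P := ⟨Q, hQ⟩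
    have := Polynomial.natDegree_le_of_dvd hdvd hPne
    simpa [natDegree_pow] using this
  -- evaluate the mapped P at λ
  have hfactor : Polynomial.eval lam (P.map (algebraMap ℂ B))
      = (lam - algebraMap ℂ B a) ^ e * Polynomial.eval lam (Q.map (algebraMap ℂ B)) := by
    rw [hQ]
    simp [Polynomial.map_mul, Polynomial.map_pow, Polynomial.map_sub, eval_mul, eval_pow,
      eval_sub, map_C, eval_C, map_X, eval_X]
    rfl
  -- eval of Q is a unit
  have hQunit : IsUnit (Polynomial.eval lam (Q.map (algebraMap ℂ B))) := by
    obtain ⟨c, hc⟩ := (X_sub_C_dvd_sub_C_eval (a := a) (p := Q))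
    have hc' : Q = C (Q.eval a) + (X - C a) * c := by linear_combination hc
    have : Polynomial.eval lam (Q.map (algebraMap ℂ B))
        = algebraMap ℂ B (Q.eval a)
          + (lam - algebraMap ℂ B a) * Polynomial.eval lam (c.map (algebraMap ℂ B)) := by
      conv_lhs => rw [hc']
      simp [Polynomial.map_add, Polynomial.map_mul, Polynomial.map_sub, eval_add, eval_mul,
        eval_sub, map_C, eval_C, map_X, eval_X]
    rw [this]
    refine IsNilpotent.isUnit_add_left_of_commute ?_ ?_ (Commute.all _ _)
    · rw [hlam_sub, mul_assoc]
      exact (Commute.all _ _).isNilpotent_mul_right (Bw_nilpotent m r)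
    · exact (Ne.isUnit hQa).map (algebraMap ℂ B)
  -- compare eval of χ with eval of P modulo w^r
  have hcoeffs : ∀ j : ℕ, ∃ t : B,
      (χ.map (algebraMap (Amod m) B)).coeff j
        = (P.map (algebraMap ℂ B)).coeff j + (Bmod.w m r) ^ r * t := by
    intro j
    obtain ⟨t, ht⟩ := algebraMap_sub_const m r hr (χ.coeff j)
    refine ⟨t, ?_⟩
    rw [coeff_map, coeff_map, hP, coeff_map, ht]
  choose tt htt using hcoeffs
  have hevalsum : ∀ (pp : Polynomial B), pp.natDegree < d + 1 →
      Polynomial.eval lam pp = ∑ j ∈ Finset.range (d + 1), pp.coeff j * lam ^ j :=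
    fun pp h => eval_eq_sum_range' h lam
  have hdegχ : (χ.map (algebraMap (Amod m) B)).natDegree < d + 1 :=
    Nat.lt_succ_of_le natDegree_map_le
  have hdegP : (P.map (algebraMap ℂ B)).natDegree < d + 1 := by
    refine Nat.lt_succ_of_le (le_trans natDegree_map_le ?_)
    rw [hPdeg]
  have hdiff : Polynomial.eval lam (χ.map (algebraMap (Amod m) B))
      = Polynomial.eval lam (P.map (algebraMap ℂ B))
        + (Bmod.w m r) ^ r * ∑ j ∈ Finset.range (d + 1), tt j * lam ^ j := by
    rw [hevalsum _ hdegχ, hevalsum _ hdegP, Finset.mul_sum, ← Finset.sum_add_distrib]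
    refine Finset.sum_congr rfl (fun j _ => ?_)
    rw [htt j]
    ring
  -- assemble
  set u1 : B := Bmod.mk m r q1
  set u2 : B := Polynomial.eval lam (Q.map (algebraMap ℂ B))
  set t : B := ∑ j ∈ Finset.range (d + 1), tt j * lam ^ j
  have her : e < r := by omega
  have hfinal : Polynomial.eval lam (χ.map (algebraMap (Amod m) B))
      = (Bmod.w m r) ^ e * (u1 ^ e * u2 + (Bmod.w m r) ^ (r - e) * t) := by
    rw [hdiff, hfactor, hlam_sub, mul_pow]
    have : (Bmod.w m r) ^ r = (Bmod.w m r) ^ e * (Bmod.w m r) ^ (r - e) := by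
      rw [← pow_add]
      congr 1
      omega
    rw [this]
    ring
  refine ⟨e, _, hed, ?_, hfinal⟩
  refine IsNilpotent.isUnit_add_left_of_commute ?_ ?_ (Commute.all _ _)
  · have : (Bmod.w m r) ^ (r - e) * t = Bmod.w m r * ((Bmod.w m r) ^ (r - e - 1) * t) := by
      rw [← mul_assoc, ← pow_succ']
      congr 2
      omega
    rw [this]
    exact (Commute.all _ _).isNilpotent_mul_right (Bw_nilpotent m r)
  · exact (hq1unit.pow e).mul hQunit

end S4Aux

namespace S4Aux

lemma pow_comm_apply {R M M' : Type*} [CommRing R] [AddCommGroup M] [Module R M]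
    [AddCommGroup M'] [Module R M'] (g : M →ₗ[R] M') (S : Module.End R M)
    (S' : Module.End R M') (h : ∀ x, g (S x) = S' (g x)) :
    ∀ (n : ℕ) (x : M), g ((S ^ n) x) = (S' ^ n) (g x) := by
  intro n
  induction n with
  | zero => intro x; simp
  | succ n ih =>
      intro x
      rw [pow_succ, Module.End.mul_apply, ih (S x), h x, ← Module.End.mul_apply, ← pow_succ]

lemma aeval_comm_apply {R M M' : Type*} [CommRing R] [AddCommGroup M] [Module R M]
    [AddCommGroup M'] [Module R M'] (g : M →ₗ[R] M') (S : Module.End R M)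
    (S' : Module.End R M') (h : ∀ x, g (S x) = S' (g x)) (p : Polynomial R) (x : M) :
    g ((Polynomial.aeval S p) x) = (Polynomial.aeval S' p) (g x) := by
  induction p using Polynomial.induction_on' with
  | add p q hp hq => simp only [map_add, LinearMap.add_apply, map_add, hp, hq]
  | monomial n c =>
      rw [Polynomial.aeval_monomial, Polynomial.aeval_monomial, Module.End.mul_apply,
        Module.End.mul_apply, Module.algebraMap_end_apply, Module.algebraMap_end_apply,
        map_smul, pow_comm_apply g S S' h n x]

lemma aeval_eig {R M : Type*} [CommRing R] [AddCommGroup M] [Module R M]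
    (f : M →ₗ[R] R) (S : Module.End R M) (lam : R) (h : ∀ x, f (S x) = lam * f x)
    (p : Polynomial R) (x : M) :
    f ((Polynomial.aeval S p) x) = p.eval lam * f x := by
  have hpow : ∀ (n : ℕ) (x : M), f ((S ^ n) x) = lam ^ n * f x := by
    intro n
    induction n with
    | zero => intro x; simp
    | succ n ih =>
        intro x
        rw [pow_succ, Module.End.mul_apply, ih (S x), h x, pow_succ]
        ring
  induction p using Polynomial.induction_on' with
  | add p q hp hq =>
      simp only [map_add, LinearMap.add_apply, hp, hq, Polynomial.eval_add]
      ring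
  | monomial n c =>
      rw [Polynomial.aeval_monomial, Module.End.mul_apply, Module.algebraMap_end_apply,
        map_smul, hpow, Polynomial.eval_monomial, smul_eq_mul]
      ring

end S4Aux

/-- If `V` is a free `A`-module of rank `r` carrying an `A`-linear map `∇̄`
compatible, via a surjective `B`-linear map `ϖ₀ : B ⊗[A] V → B`, with multiplication by an
element `μ̂₀ ∈ B` whose `w¹`-coefficient is nonzero, then every `∇̄`-invariant `A`-submodule
`U ⊆ V` with `V/U` free is `0` or `V`. -/
theorem statement4 (m r : ℕ) (hm : 2 ≤ m) (hr : 1 ≤ r) [NeZero m]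
    (V : Type*) [AddCommGroup V] [Module (Amod m) V]
    [Module.Finite (Amod m) V] [Module.Free (Amod m) V]
    (hrank : Module.finrank (Amod m) V = r)
    (Db : V →ₗ[Amod m] V)
    (ϖ : Bmod m r ⊗[Amod m] V →ₗ[Bmod m r] Bmod m r)
    (hϖ : Function.Surjective ϖ)
    (μ : Bmod m r) (hμ : Bmod.coeff m r 1 μ ≠ 0)
    (hcompat : ∀ x : Bmod m r ⊗[Amod m] V,
      (r : ℕ) • ϖ (LinearMap.lTensor (Bmod m r) Db x) = μ * ϖ x)
    (U : Submodule (Amod m) V) (hU : ∀ a ∈ U, Db a ∈ U)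
    (hfree : Module.Free (Amod m) (V ⧸ U)) :
    U = ⊥ ∨ U = ⊤ := by

  classical
  by_contra hcon
  push_neg at hcon
  obtain ⟨hbot, htop⟩ := hcon
  haveI := hfree
  have h2r : 2 * r ≤ m * r := Nat.mul_le_mul_right r hm
  have hrC : ((r : ℕ) : ℂ) ≠ 0 := Nat.cast_ne_zero.2 (by omega)
  -- the eigenvalue `lam = μ / r` and a polynomial lift of it
  obtain ⟨qmu, hqmu⟩ := S4Aux.Bmk_surjective m r μ
  set qlam : Polynomial ℂ := Polynomial.C (((r : ℕ) : ℂ)⁻¹) * qmu with hqlam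
  have hqlam1 : qlam.coeff 1 ≠ 0 := by
    rw [hqlam, Polynomial.coeff_C_mul]
    have h1 : Bmod.coeff m r 1 μ = qmu.coeff 1 := by
      rw [← hqmu, S4Aux.Bcoeff_lift m r qmu 1 (by omega)]
    intro hcontra
    rcases mul_eq_zero.mp hcontra with h | h
    · exact inv_ne_zero hrC h
    · exact hμ (by rw [h1, h])
  set lam : Bmod m r := Bmod.mk m r qlam with hlam
  have hlam_mu : lam = ((r : ℕ) : ℂ)⁻¹ • μ := by
    rw [hlam, hqlam, S4Aux.Bmk_mul, ← S4Aux.Balgebra_eq, hqmu, Algebra.smul_def]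
  -- the base-changed endomorphism and the eigenvalue property of ϖ
  set T : (Bmod m r ⊗[Amod m] V) →ₗ[Bmod m r] (Bmod m r ⊗[Amod m] V) :=
    Db.baseChange (Bmod m r) with hT
  have hTl : ∀ x, T x = LinearMap.lTensor (Bmod m r) Db x := fun x => by
    rw [hT]; exact congrFun (LinearMap.baseChange_eq_ltensor Db) x
  have heig : ∀ x, ϖ (T x) = lam * ϖ x := by
    intro x
    have h1 := hcompat x
    rw [← hTl x] at h1
    have h2 : (((r : ℕ) : ℂ)) • ϖ (T x) = μ * ϖ x := by
      rw [Nat.cast_smul_eq_nsmul]; exact h1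
    calc ϖ (T x) = ((r : ℕ) : ℂ)⁻¹ • ((((r : ℕ) : ℂ)) • ϖ (T x)) := by
          rw [smul_smul, inv_mul_cancel₀ hrC, one_smul]
    _ = ((r : ℕ) : ℂ)⁻¹ • (μ * ϖ x) := by rw [h2]
    _ = lam * ϖ x := by rw [hlam_mu, smul_mul_assoc]
  -- module-theoretic structure of U and V ⧸ U
  haveI : IsNoetherian (Amod m) V := isNoetherian_of_isNoetherianRing_of_finite _ _
  haveI hUfin : Module.Finite (Amod m) U := Module.Finite.iff_fg.2 (IsNoetherian.noetherian U)
  obtain ⟨sec, hsec⟩ := Module.projective_lifting_property U.mkQ (LinearMap.id)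
    (Submodule.mkQ_surjective U)
  have hsec' : ∀ y : V ⧸ U, U.mkQ (sec y) = y := fun y => LinearMap.congr_fun hsec y
  have hmem : ∀ v : V, ((LinearMap.id : V →ₗ[Amod m] V) - sec ∘ₗ U.mkQ) v ∈ U := by
    intro v
    simp only [LinearMap.sub_apply, LinearMap.id_apply, LinearMap.comp_apply]
    rw [← Submodule.Quotient.mk_eq_zero U]
    have h4 : U.mkQ (v - sec (U.mkQ v)) = 0 := by
      rw [map_sub, hsec', sub_self]
    simpa using h4
  set ρ : V →ₗ[Amod m] U := ((LinearMap.id : V →ₗ[Amod m] V) - sec ∘ₗ U.mkQ).codRestrict U hmem with hρ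
  haveI : Module.Projective (Amod m) U := by
    refine Module.Projective.of_split U.subtype ρ ?_
    ext u
    have : U.mkQ (u : V) = 0 := (Submodule.Quotient.mk_eq_zero U).2 u.2
    simp [hρ, LinearMap.codRestrict_apply, this]
  haveI : Module.FinitePresentation (Amod m) U :=
    Module.finitePresentation_of_finite (Amod m) U
  haveI : Module.Free (Amod m) U := Module.free_of_flat_of_isLocalRing
  -- rank additivity
  set φ : (↥U × (V ⧸ U)) →ₗ[Amod m] V := U.subtype.coprod sec with hφ
  have hφbij : Function.Bijective φ := by
    constructor
    · rintro ⟨u, qq⟩ ⟨u', qq'⟩ hxy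
      simp only [hφ, LinearMap.coprod_apply, Submodule.coe_subtype] at hxy
      have hq : qq = qq' := by
        have h3 := congrArg U.mkQ hxy
        simp only [map_add, hsec'] at h3
        rwa [show U.mkQ (u : V) = 0 from (Submodule.Quotient.mk_eq_zero U).2 u.2,
          show U.mkQ (u' : V) = 0 from (Submodule.Quotient.mk_eq_zero U).2 u'.2,
          zero_add, zero_add] at h3
      subst hq
      have hu : (u : V) = (u' : V) := by
        exact add_right_cancel hxy
      exact Prod.ext (Subtype.ext hu) rfl
    · intro v
      refine ⟨(⟨v - sec (U.mkQ v), by simpa using hmem v⟩, U.mkQ v), ?_⟩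
      simp [hφ, LinearMap.coprod_apply]
  have hadd : Module.finrank (Amod m) U + Module.finrank (Amod m) (V ⧸ U) = r := by
    rw [← Module.finrank_prod, (LinearEquiv.ofBijective φ hφbij).finrank_eq, hrank]
  -- both ranks are at least 1
  have hp1 : 1 ≤ Module.finrank (Amod m) U := by
    by_contra h
    push_neg at h
    have h0 : Module.finrank (Amod m) U = 0 := by omega
    have hcard : Fintype.card (Module.Free.ChooseBasisIndex (Amod m) U) = 0 := by
      rw [← Module.finrank_eq_card_chooseBasisIndex]; exact h0
    haveI : IsEmpty (Module.Free.ChooseBasisIndex (Amod m) U) :=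
      Fintype.card_eq_zero_iff.1 hcard
    haveI : Subsingleton U := (Module.Free.chooseBasis (Amod m) U).repr.toEquiv.subsingleton
    exact hbot Submodule.eq_bot_of_subsingleton
  have hs1 : 1 ≤ Module.finrank (Amod m) (V ⧸ U) := by
    by_contra h
    push_neg at h
    have h0 : Module.finrank (Amod m) (V ⧸ U) = 0 := by omega
    have hcard : Fintype.card (Module.Free.ChooseBasisIndex (Amod m) (V ⧸ U)) = 0 := by
      rw [← Module.finrank_eq_card_chooseBasisIndex]; exact h0
    haveI : IsEmpty (Module.Free.ChooseBasisIndex (Amod m) (V ⧸ U)) :=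
      Fintype.card_eq_zero_iff.1 hcard
    haveI : Subsingleton (V ⧸ U) :=
      (Module.Free.chooseBasis (Amod m) (V ⧸ U)).repr.toEquiv.subsingleton
    exact htop (Submodule.Quotient.subsingleton_iff.1 inferInstance)
  -- the restricted and quotient endomorphisms and their characteristic polynomials
  set Db1 : U →ₗ[Amod m] U := Db.restrict hU with hDb1
  have hUle : U ≤ U.comap Db := fun x hx => hU x hx
  set Db2 : (V ⧸ U) →ₗ[Amod m] (V ⧸ U) := Submodule.mapQ U U Db hUle with hDb2
  set χ₁ := Db1.charpoly with hχ₁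
  set χ₂ := Db2.charpoly with hχ₂
  have hχ₁deg : χ₁.natDegree = Module.finrank (Amod m) U := Db1.charpoly_natDegree
  have hχ₂deg : χ₂.natDegree = Module.finrank (Amod m) (V ⧸ U) := Db2.charpoly_natDegree
  set q₁ := χ₁.map (algebraMap (Amod m) (Bmod m r)) with hq₁
  set q₂ := χ₂.map (algebraMap (Amod m) (Bmod m r)) with hq₂
  set T1 := Db1.baseChange (Bmod m r) with hT1
  set T2 := Db2.baseChange (Bmod m r) with hT2
  set ι := (U.subtype).baseChange (Bmod m r) with hι
  set π := (U.mkQ).baseChange (Bmod m r) with hπ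
  have hcommπ : ∀ x, π (T x) = T2 (π x) := by
    intro x
    have h1 : Db2 ∘ₗ U.mkQ = U.mkQ ∘ₗ Db := Submodule.mapQ_mkQ U U Db
    have h2 := congrArg (LinearMap.baseChange (Bmod m r)) h1
    rw [LinearMap.baseChange_comp, LinearMap.baseChange_comp] at h2
    exact (LinearMap.congr_fun h2.symm x)
  have hcommι : ∀ u, ι (T1 u) = T (ι u) := by
    intro u
    have h1 : U.subtype ∘ₗ Db1 = Db ∘ₗ U.subtype := by
      ext u'
      simp [hDb1, LinearMap.restrict_apply]
    have h2 := congrArg (LinearMap.baseChange (Bmod m r)) h1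
    rw [LinearMap.baseChange_comp, LinearMap.baseChange_comp] at h2
    exact (LinearMap.congr_fun h2 u)
  have hCH1 : (Polynomial.aeval T1) q₁ = 0 := by
    rw [hq₁, hT1, ← LinearMap.charpoly_baseChange]
    exact LinearMap.aeval_self_charpoly _
  have hCH2 : (Polynomial.aeval T2) q₂ = 0 := by
    rw [hq₂, hT2, ← LinearMap.charpoly_baseChange]
    exact LinearMap.aeval_self_charpoly _
  -- the key product identity
  obtain ⟨x₀, hx₀⟩ := hϖ 1
  have hy : π ((Polynomial.aeval T) q₂ x₀) = 0 := by
    rw [S4Aux.aeval_comm_apply π T T2 hcommπ q₂ x₀, hCH2]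
    simp
  have hexact := lTensor_exact (Bmod m r) (LinearMap.exact_subtype_mkQ U)
    (Submodule.mkQ_surjective U)
  have hmem2 : (Polynomial.aeval T) q₂ x₀
      ∈ Set.range (LinearMap.lTensor (Bmod m r) U.subtype) := by
    apply (hexact _).1
    rw [← congrFun (LinearMap.baseChange_eq_ltensor U.mkQ) _]
    exact hy
  obtain ⟨u0, hu0⟩ := hmem2
  have hu0' : ι u0 = (Polynomial.aeval T) q₂ x₀ := by
    rw [hι, congrFun (LinearMap.baseChange_eq_ltensor U.subtype) u0]
    exact hu0
  have hzero : (Polynomial.aeval T) q₁ ((Polynomial.aeval T) q₂ x₀) = 0 := by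
    rw [← hu0', ← S4Aux.aeval_comm_apply ι T1 T hcommι q₁ u0, hCH1]
    simp
  have hprod : q₁.eval lam * q₂.eval lam = 0 := by
    have h5 : ϖ ((Polynomial.aeval T) (q₁ * q₂) x₀) = (q₁ * q₂).eval lam * ϖ x₀ :=
      S4Aux.aeval_eig ϖ T lam heig (q₁ * q₂) x₀
    rw [map_mul (Polynomial.aeval T), Module.End.mul_apply, hzero, map_zero,
      hx₀, mul_one, Polynomial.eval_mul] at h5
    exact h5.symm
  -- the valuation bounds give a contradiction
  obtain ⟨e₁, u₁, he₁, hu₁, heq₁⟩ := S4Aux.keyL m r hm hr qlam hqlam1 χ₁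
    (Db1.charpoly_monic) (by omega)
  obtain ⟨e₂, u₂, he₂, hu₂, heq₂⟩ := S4Aux.keyL m r hm hr qlam hqlam1 χ₂
    (Db2.charpoly_monic) (by omega)
  rw [hq₁, hq₂, show lam = Bmod.mk m r qlam from hlam, heq₁, heq₂] at hprod
  have hzero2 : (Bmod.w m r) ^ (e₁ + e₂) * (u₁ * u₂) = 0 := by
    rw [pow_add]
    linear_combination hprod
  have hw0 : (Bmod.w m r) ^ (e₁ + e₂) = 0 :=
    ((hu₁.mul hu₂).mul_left_eq_zero).1 hzero2
  exact S4Aux.Bw_pow_ne_zero m r (e₁ + e₂) (by omega) hw0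


end
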